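/- For m ≥ 3 and positive reals α₁,…,α_m with Z a standard normal random variable, the function α_ℓ ↦ E[∏_{k=2}^m Φ(√(α_k/α₁)·Z)] is strictly increasing in each α_ℓ for 2 ≤ ℓ ≤ m; for m = 2 it is constantly 1/2. -/
import Mathlib


open MeasureTheory

/-- The standard normal density `φ`. -/
noncomputable def stdNormalPDF (z : ℝ) : ℝ :=
  Real.exp (-z ^ 2 / 2) / Real.sqrt (2 * Real.pi)

/-- The standard normal CDF `Φ`. -/
noncomputable def stdNormalCDF (b : ℝ) : ℝ :=
  ∫ z in Set.Iic b, stdNormalPDF z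

open Set

lemma sqrt2pi_pos : 0 < Real.sqrt (2 * Real.pi) :=
  Real.sqrt_pos.mpr (by positivity)

lemma pdf_pos (z : ℝ) : 0 < stdNormalPDF z :=
  div_pos (Real.exp_pos _) sqrt2pi_pos

lemma pdf_nonneg (z : ℝ) : 0 ≤ stdNormalPDF z := (pdf_pos z).le

lemma pdf_eq (z : ℝ) : stdNormalPDF z = Real.exp (-(1/2) * z ^ 2) / Real.sqrt (2 * Real.pi) := by
  unfold stdNormalPDF; ring_nf

lemma pdf_even (z : ℝ) : stdNormalPDF (-z) = stdNormalPDF z := by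
  unfold stdNormalPDF; rw [neg_pow]; ring_nf

lemma pdf_measurable : Measurable stdNormalPDF := by
  unfold stdNormalPDF
  exact (Real.measurable_exp.comp ((measurable_id.pow_const 2).neg.div_const 2)).div_const _

lemma pdf_integrable : Integrable stdNormalPDF := by
  have h := (integrable_exp_neg_mul_sq (b := 1/2) (by norm_num)).div_const (Real.sqrt (2 * Real.pi))
  exact h.congr (by filter_upwards with z using (pdf_eq z).symm)

lemma pdf_integral : ∫ z : ℝ, stdNormalPDF z = 1 := by
  have h : ∫ z : ℝ, stdNormalPDF z
      = (∫ z : ℝ, Real.exp (-(1/2) * z ^ 2)) / Real.sqrt (2 * Real.pi) := by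
    rw [← integral_div]; exact integral_congr_ae (by filter_upwards with z using pdf_eq z)
  rw [h, integral_gaussian]
  rw [show Real.pi / (1/2) = 2 * Real.pi by ring]
  field_simp

lemma cdf_nonneg (b : ℝ) : 0 ≤ stdNormalCDF b :=
  setIntegral_nonneg measurableSet_Iic fun z _ => pdf_nonneg z

lemma cdf_mono : Monotone stdNormalCDF := by
  intro a b hab
  exact setIntegral_mono_set pdf_integrable.integrableOn
    (Filter.Eventually.of_forall fun z => pdf_nonneg z)
    (HasSubset.Subset.eventuallyLE (Iic_subset_Iic.mpr hab))

lemma cdf_measurable : Measurable stdNormalCDF := cdf_mono.measurable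

lemma cdf_strictMono : StrictMono stdNormalCDF := by
  intro a b hab
  have h := intervalIntegral.integral_Iic_sub_Iic (pdf_integrable.integrableOn (s := Iic a))
    (pdf_integrable.integrableOn (s := Iic b))
  have hpos : 0 < ∫ x in a..b, stdNormalPDF x :=
    intervalIntegral.intervalIntegral_pos_of_pos
      (pdf_integrable.intervalIntegrable) pdf_pos hab
  have : stdNormalCDF b - stdNormalCDF a > 0 := by rw [stdNormalCDF, stdNormalCDF, h]; exact hpos
  linarith

lemma cdf_le_one (b : ℝ) : stdNormalCDF b ≤ 1 := by
  rw [← pdf_integral]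
  calc stdNormalCDF b ≤ ∫ z in (univ : Set ℝ), stdNormalPDF z := by
        exact setIntegral_mono_set pdf_integrable.integrableOn
          (Filter.Eventually.of_forall fun z => pdf_nonneg z)
          (HasSubset.Subset.eventuallyLE (subset_univ _))
    _ = ∫ z : ℝ, stdNormalPDF z := by rw [Measure.restrict_univ]

lemma cdf_neg (b : ℝ) : stdNormalCDF (-b) = 1 - stdNormalCDF b := by
  have h1 : stdNormalCDF (-b) = ∫ z in Ioi b, stdNormalPDF z := by
    rw [stdNormalCDF, ← integral_comp_neg_Ioi]
    exact setIntegral_congr_ae measurableSet_Ioi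
      (Filter.Eventually.of_forall fun z _ => pdf_even z)
  have h2 := intervalIntegral.integral_Iic_add_Ioi (b := b) pdf_integrable.integrableOn pdf_integrable.integrableOn
  rw [pdf_integral] at h2
  rw [h1, ← h2, stdNormalCDF]; ring

lemma cdf_zero : stdNormalCDF 0 = 1/2 := by
  have := cdf_neg 0
  rw [neg_zero] at this
  linarith

lemma cdf_pos (b : ℝ) : 0 < stdNormalCDF b :=
  lt_of_le_of_lt (cdf_nonneg (b - 1)) (cdf_strictMono (by linarith))

lemma cdf_lt_one (b : ℝ) : stdNormalCDF b < 1 := by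
  have := cdf_pos (-b)
  rw [cdf_neg] at this
  linarith

/-- Integrability of a bounded measurable function times the Gaussian density. -/
lemma integrable_mul_pdf (g : ℝ → ℝ) (hg : Measurable g) (hb : ∀ z, |g z| ≤ 1) :
    Integrable (fun z => g z * stdNormalPDF z) := by
  refine Integrable.mono' pdf_integrable ((hg.mul pdf_measurable).aestronglyMeasurable) ?_
  filter_upwards with z
  rw [Real.norm_eq_abs, abs_mul, abs_of_nonneg (pdf_nonneg z)]
  calc |g z| * stdNormalPDF z ≤ 1 * stdNormalPDF z :=
        mul_le_mul_of_nonneg_right (hb z) (pdf_nonneg z)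
    _ = stdNormalPDF z := one_mul _

theorem expected_phi_product_strictMono :
    (∀ m : ℕ, 2 ≤ m → ∀ α : Fin (m + 1) → ℝ, (∀ k, 0 < α k) →
      ∀ ℓ : Fin (m + 1), ℓ ≠ 0 →
        StrictMonoOn (fun a : ℝ =>
            ∫ z : ℝ,
              (∏ i : Fin m,
                stdNormalCDF
                  (Real.sqrt (Function.update α ℓ a i.succ / Function.update α ℓ a 0) * z)) *
                stdNormalPDF z)
          (Set.Ioi (0 : ℝ))) ∧
    (∀ α₁ α₂ : ℝ, 0 < α₁ → 0 < α₂ →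
      ∫ z : ℝ, stdNormalCDF (Real.sqrt (α₂ / α₁) * z) * stdNormalPDF z = 1 / 2) := by
  constructor
  · intro m hm α hα ℓ hℓ
    obtain ⟨j, rfl⟩ := Fin.eq_succ_of_ne_zero hℓ
    intro a ha b hb hab
    simp only [Set.mem_Ioi] at ha hb
    have hα0 : (0:ℝ) < α 0 := hα 0
    -- abbreviations
    set c : Fin m → ℝ := fun i => Real.sqrt (α i.succ / α 0) with hc
    have hcpos : ∀ i, 0 < c i := fun i => Real.sqrt_pos.mpr (div_pos (hα _) hα0)
    set sa : ℝ := Real.sqrt (a / α 0) with hsa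
    set sb : ℝ := Real.sqrt (b / α 0) with hsb
    have hsa_pos : 0 < sa := Real.sqrt_pos.mpr (div_pos ha hα0)
    have hs : sa < sb := Real.sqrt_lt_sqrt (div_pos ha hα0).le
      ((div_lt_div_iff_of_pos_right hα0).mpr hab)
    set P : ℝ → ℝ := fun z => ∏ i ∈ Finset.univ.erase j, stdNormalCDF (c i * z) with hP
    -- rewrite the product for an updated value t at position j.succ
    have key : ∀ t : ℝ, ∀ z : ℝ,
        (∏ i : Fin m, stdNormalCDF
          (Real.sqrt (Function.update α j.succ t i.succ / Function.update α j.succ t 0) * z))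
        = stdNormalCDF (Real.sqrt (t / α 0) * z) * P z := by
      intro t z
      rw [← Finset.mul_prod_erase Finset.univ _ (Finset.mem_univ j)]
      congr 1
      · rw [Function.update_self, Function.update_of_ne hℓ.symm]
      · refine Finset.prod_congr rfl fun i hi => ?_
        have hij : i ≠ j := Finset.ne_of_mem_erase hi
        rw [Function.update_of_ne (fun h => hij (Fin.succ_injective _ h)),
          Function.update_of_ne hℓ.symm]
    have hP_meas : Measurable P :=
      Finset.measurable_prod _ fun i _ =>
        cdf_measurable.comp (measurable_id.const_mul (c i))
    have hP_bound : ∀ z, 0 ≤ P z ∧ P z ≤ 1 := fun z =>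
      ⟨Finset.prod_nonneg fun i _ => cdf_nonneg _,
       Finset.prod_le_one (fun i _ => cdf_nonneg _) (fun i _ => (cdf_le_one _))⟩
    -- integrable pieces
    have hint : ∀ s : ℝ, Integrable (fun z => stdNormalCDF (s * z) * P z * stdNormalPDF z) := by
      intro s
      refine integrable_mul_pdf _ ((cdf_measurable.comp (measurable_id.const_mul s)).mul hP_meas)
        fun z => ?_
      rw [abs_mul]
      have h1 : |stdNormalCDF (s * z)| ≤ 1 := by
        rw [abs_of_nonneg (cdf_nonneg _)]; exact cdf_le_one _
      have h2 : |P z| ≤ 1 := by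
        rw [abs_of_nonneg (hP_bound z).1]; exact (hP_bound z).2
      calc |stdNormalCDF (s * z)| * |P z| ≤ 1 * 1 :=
            mul_le_mul h1 h2 (abs_nonneg _) zero_le_one
        _ = 1 := one_mul 1
    -- rewrite both integrals
    have hFa : (∫ z : ℝ,
          (∏ i : Fin m, stdNormalCDF
            (Real.sqrt (Function.update α j.succ a i.succ / Function.update α j.succ a 0) * z)) *
          stdNormalPDF z)
        = ∫ z : ℝ, stdNormalCDF (sa * z) * P z * stdNormalPDF z :=
      integral_congr_ae (Filter.Eventually.of_forall fun z => congrArg (· * stdNormalPDF z) (key a z))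
    have hFb : (∫ z : ℝ,
          (∏ i : Fin m, stdNormalCDF
            (Real.sqrt (Function.update α j.succ b i.succ / Function.update α j.succ b 0) * z)) *
          stdNormalPDF z)
        = ∫ z : ℝ, stdNormalCDF (sb * z) * P z * stdNormalPDF z :=
      integral_congr_ae (Filter.Eventually.of_forall fun z => congrArg (· * stdNormalPDF z) (key b z))
    simp only [hFa, hFb]
    rw [← sub_pos, ← integral_sub (hint sb) (hint sa)]
    -- the difference integrand
    set D : ℝ → ℝ := fun z =>
      stdNormalCDF (sb * z) * P z * stdNormalPDF z - stdNormalCDF (sa * z) * P z * stdNormalPDF z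
      with hD
    have hD_int : Integrable D := (hint sb).sub (hint sa)
    -- split at 0 and reflect the negative half
    have hsplit := intervalIntegral.integral_Iic_add_Ioi (b := (0:ℝ)) hD_int.integrableOn hD_int.integrableOn
    have hrefl : (∫ z in Iic (0:ℝ), D z) = ∫ z in Ioi (0:ℝ), D (-z) := by
      rw [integral_comp_neg_Ioi]; norm_num
    have hDneg_int : IntegrableOn (fun z => D (-z)) (Ioi (0:ℝ)) :=
      (hD_int.comp_neg).integrableOn
    have hcomb : (∫ z : ℝ, D z) = ∫ z in Ioi (0:ℝ), (D (-z) + D z) := by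
      rw [← hsplit, hrefl, ← integral_add hDneg_int hD_int.integrableOn]
    rw [hcomb]
    -- strict positivity on Ioi 0
    have hpos : ∀ z ∈ Ioi (0:ℝ), 0 < D (-z) + D z := by
      intro z hz
      simp only [Set.mem_Ioi] at hz
      have hΔ : 0 < stdNormalCDF (sb * z) - stdNormalCDF (sa * z) :=
        sub_pos.mpr (cdf_strictMono (mul_lt_mul_of_pos_right hs hz))
      have hPP : P (-z) < P z := by
        refine Finset.prod_lt_prod_of_nonempty (fun i _ => cdf_pos _) (fun i _ => ?_) ?_
        · exact cdf_strictMono (by nlinarith [hcpos i])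
        · rw [← Finset.card_pos, Finset.card_erase_of_mem (Finset.mem_univ j),
            Finset.card_univ, Fintype.card_fin]
          omega
      have hrw : D (-z) + D z
          = (stdNormalCDF (sb * z) - stdNormalCDF (sa * z)) * (P z - P (-z)) * stdNormalPDF z := by
        simp only [hD]
        rw [show sb * -z = -(sb * z) by ring, show sa * -z = -(sa * z) by ring,
          cdf_neg, cdf_neg, pdf_even]
        ring
      rw [hrw]
      exact mul_pos (mul_pos hΔ (sub_pos.mpr hPP)) (pdf_pos z)
    have hnonneg : 0 ≤ᵐ[volume.restrict (Ioi (0:ℝ))] fun z => D (-z) + D z := by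
      rw [Filter.EventuallyLE, ae_restrict_iff' measurableSet_Ioi]
      filter_upwards with z hz using (hpos z hz).le
    have hint' : IntegrableOn (fun z => D (-z) + D z) (Ioi (0:ℝ)) :=
      hDneg_int.add hD_int.integrableOn
    rw [setIntegral_pos_iff_support_of_nonneg_ae hnonneg hint']
    have hsub : Ioi (0:ℝ) ⊆ Function.support (fun z => D (-z) + D z) ∩ Ioi 0 :=
      fun z hz => ⟨ne_of_gt (hpos z hz), hz⟩
    calc (0:ENNReal) < volume (Ioi (0:ℝ)) := by rw [Real.volume_Ioi]; exact ENNReal.zero_lt_top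
      _ ≤ volume (Function.support (fun z => D (-z) + D z) ∩ Ioi 0) := measure_mono hsub
  · intro α₁ α₂ h₁ h₂
    set s : ℝ := Real.sqrt (α₂ / α₁)
    set f : ℝ → ℝ := fun z => stdNormalCDF (s * z) * stdNormalPDF z with hf
    have hf_int : Integrable f := by
      refine integrable_mul_pdf _ (cdf_measurable.comp (measurable_id.const_mul s)) fun z => ?_
      rw [abs_of_nonneg (cdf_nonneg _)]; exact cdf_le_one _
    have hrefl : (∫ z : ℝ, f (-z)) = ∫ z : ℝ, f z := integral_neg_eq_self f volume
    have hsum : (∫ z : ℝ, f (-z)) + (∫ z : ℝ, f z) = 1 := by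
      rw [← integral_add hf_int.comp_neg hf_int]
      have : ∀ z : ℝ, f (-z) + f z = stdNormalPDF z := by
        intro z
        simp only [hf]
        rw [show s * -z = -(s * z) by ring, cdf_neg, pdf_even]
        ring
      rw [integral_congr_ae (Filter.Eventually.of_forall this), pdf_integral]
    rw [hrefl] at hsum
    linarith
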